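/- Let λ, μ > 0, L = diag(μ, μλ²), and let k(x) = k(x; 0) be the fundamental singular strain at the origin with Burgers modulus b, and W(h) = (1/2) h · Lh. Then for 0 < R' < R, ∫_{E_R(0)\closure(E_{R'}(0))} W(k) dx = (μλb²/4π) log(R/R'); consequently, for any bounded open Ω containing closure(E_R(0)), the quantity (μλb²/4π) log R + ∫_{Ω \ E_R(0)} W(k) dx is independent of R ∈ (0, R₀) for any R₀ with closure(E_{R₀}(0)) ⊂ Ω. -/

import Mathlib

open MeasureTheory

/-- The fundamental singular strain of a screw dislocation at the origin with Burgers
modulus `b`, for Lamé modulus `lam`: `k(x) = (bλ/(2π(λ²x₁² + x₂²)))·(−x₂, x₁)`. -/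
noncomputable def kfun0 (lam b : ℝ) (x : ℝ × ℝ) : ℝ × ℝ :=
  (b * lam / (2 * Real.pi * (lam ^ 2 * x.1 ^ 2 + x.2 ^ 2)) * (-x.2),
   b * lam / (2 * Real.pi * (lam ^ 2 * x.1 ^ 2 + x.2 ^ 2)) * x.1)

/-- The open ellipse `E_r(0) = {x : x₁² + (x₂/λ)² < r²}`. -/
def ellipse0 (lam r : ℝ) : Set (ℝ × ℝ) :=
  {x : ℝ × ℝ | x.1 ^ 2 + (x.2 / lam) ^ 2 < r ^ 2}

/-- The energy density `W(k) = (1/2) k·Lk` with `L = diag(μ, μλ²)`. -/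
noncomputable def Wk (lam mu b : ℝ) (x : ℝ × ℝ) : ℝ :=
  (1 / 2 : ℝ) * ((kfun0 lam b x).1 * (mu * (kfun0 lam b x).1)
    + (kfun0 lam b x).2 * (mu * lam ^ 2 * (kfun0 lam b x).2))

open Set Real in
private lemma Wk_eq_aux (lam mu b : ℝ) (x : ℝ × ℝ) (hD : lam ^ 2 * x.1 ^ 2 + x.2 ^ 2 ≠ 0) :
    Wk lam mu b x = mu * b ^ 2 * lam ^ 2 / (8 * Real.pi ^ 2) / (lam ^ 2 * x.1 ^ 2 + x.2 ^ 2) := by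
  simp only [Wk, kfun0]
  have hπ : Real.pi ≠ 0 := Real.pi_ne_zero
  field_simp
  ring

open Set Real in
private lemma hasFDerivAt_Phi_aux (lam : ℝ) (p : ℝ × ℝ) :
    HasFDerivAt (fun q : ℝ × ℝ => (q.1 * Real.cos q.2, lam * (q.1 * Real.sin q.2)))
      (LinearMap.toContinuousLinearMap (Matrix.toLin (Module.Basis.finTwoProd ℝ) (Module.Basis.finTwoProd ℝ)
        !![Real.cos p.2, -p.1 * Real.sin p.2;
           lam * Real.sin p.2, lam * (p.1 * Real.cos p.2)])) p := by
  rw [Matrix.toLin_finTwoProd_toContinuousLinearMap]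
  convert HasFDerivAt.prodMk (𝕜 := ℝ)
    (hasFDerivAt_fst.mul ((Real.hasDerivAt_cos p.2).comp_hasFDerivAt p hasFDerivAt_snd))
    ((hasFDerivAt_fst.mul
      ((Real.hasDerivAt_sin p.2).comp_hasFDerivAt p hasFDerivAt_snd)).const_mul lam) using 2 <;>
  · ext <;> simp [smul_smul] <;> ring

open Set Real in
private lemma level_null_aux (lam : ℝ) (hlam : lam ≠ 0) (c : ℝ) :
    volume {x : ℝ × ℝ | x.1 ^ 2 + (x.2 / lam) ^ 2 = c} = 0 := by
  have hmeas : MeasurableSet {x : ℝ × ℝ | x.1 ^ 2 + (x.2 / lam) ^ 2 = c} := by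
    have : Continuous fun x : ℝ × ℝ => x.1 ^ 2 + (x.2 / lam) ^ 2 := by fun_prop
    exact this.measurable (measurableSet_singleton c)
  rw [show (volume : Measure (ℝ × ℝ)) = (volume : Measure ℝ).prod volume from
    Measure.volume_eq_prod _ _, Measure.measure_prod_null hmeas]
  refine Filter.Eventually.of_forall fun a => measure_mono_null (t :=
    {lam * Real.sqrt (c - a ^ 2), -(lam * Real.sqrt (c - a ^ 2))}) ?_ ?_
  · intro y hy
    simp only [mem_preimage, mem_setOf_eq] at hy
    have hd : (y / lam) ^ 2 = c - a ^ 2 := by linarith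
    have habs : |y / lam| = Real.sqrt (c - a ^ 2) := by
      rw [← hd, Real.sqrt_sq_eq_abs]
    rcases abs_eq (Real.sqrt_nonneg _) |>.1 habs with h | h
    · left; field_simp at h ⊢; linarith [h]
    · right; field_simp at h; exact h
  · exact (Set.Countable.measure_zero (by simp [Set.countable_singleton]) _)
open Set Real in
private lemma annulus_integral_aux (lam mu b : ℝ) (hlam : 0 < lam)
    (R' R : ℝ) (h0 : 0 < R') (hRR : R' < R) :
    (∫ x in ellipse0 lam R \ closure (ellipse0 lam R'), Wk lam mu b x)
      = mu * lam * b ^ 2 / (4 * Real.pi) * Real.log (R / R') := by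
  have hπ : (0:ℝ) < Real.pi := Real.pi_pos
  have hR : 0 < R := h0.trans hRR
  set C₀ : ℝ := mu * b ^ 2 * lam ^ 2 / (8 * Real.pi ^ 2) with hC₀
  clear_value C₀
  set q : ℝ × ℝ → ℝ := fun x => x.1 ^ 2 + (x.2 / lam) ^ 2 with hq
  have hqc : Continuous q := by fun_prop
  set Φ : ℝ × ℝ → ℝ × ℝ := fun p => (p.1 * Real.cos p.2, lam * (p.1 * Real.sin p.2)) with hΦ
  set s : Set (ℝ × ℝ) := Ioo R' R ×ˢ Ioo (-Real.pi) Real.pi with hs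
  have hs_meas : MeasurableSet s := measurableSet_Ioo.prod measurableSet_Ioo
  set A₀ : Set (ℝ × ℝ) := {x | R' ^ 2 < q x ∧ q x < R ^ 2} with hA₀
  -- the ellipse annulus is a.e. equal to A₀
  have hclos : closure (ellipse0 lam R') ⊆ {x | q x ≤ R' ^ 2} :=
    closure_minimal (fun x hx => le_of_lt (show q x < R' ^ 2 from hx)) (isClosed_le hqc continuous_const)
  have hae1 : (ellipse0 lam R \ closure (ellipse0 lam R')) =ᵐ[volume] A₀ := by
    apply MeasureTheory.ae_eq_set.2
    constructor
    · refine measure_mono_null (t := {x : ℝ × ℝ | q x = R' ^ 2}) ?_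
        (level_null_aux lam hlam.ne' _)
      rintro x ⟨⟨hx1, hx2⟩, hx3⟩
      have hx1' : q x < R ^ 2 := hx1
      have h1 : R' ^ 2 ≤ q x := not_lt.1 (fun h => hx2 (subset_closure h))
      have h2 : q x ≤ R' ^ 2 := by
        by_contra h
        exact hx3 ⟨not_le.1 h, hx1'⟩
      exact le_antisymm h2 h1
    · refine measure_mono_null (t := (∅ : Set (ℝ × ℝ))) ?_ measure_empty
      rintro x ⟨⟨hx1, hx2⟩, hx3⟩
      exact hx3 ⟨hx2, fun h => absurd (hclos h) (not_le.2 hx1)⟩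
  -- A₀ is a.e. equal to Φ '' s
  have himg : Φ '' s ⊆ A₀ := by
    rintro x ⟨⟨r, θ⟩, ⟨hr, hθ⟩, rfl⟩
    have hr0 : 0 < r := h0.trans hr.1
    have hqΦ : q (Φ (r, θ)) = r ^ 2 := by
      simp only [hΦ, hq]
      rw [mul_div_cancel_left₀ _ hlam.ne']
      have := Real.sin_sq_add_cos_sq θ
      ring_nf
      nlinarith [Real.sin_sq_add_cos_sq θ]
    constructor
    · rw [hqΦ]; nlinarith [hr.1]
    · rw [hqΦ]; nlinarith [hr.2]
  have hae2 : A₀ =ᵐ[volume] Φ '' s := by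
    rw [MeasureTheory.ae_eq_set]
    constructor
    · refine measure_mono_null (t := {x : ℝ × ℝ | x.2 = 0 ∧ x.1 ≤ 0}) ?_ ?_
      · rintro x ⟨⟨hx1, hx2⟩, hx3⟩
        by_contra hN
        simp only [Set.mem_setOf_eq, not_and, not_le] at hN
        apply hx3
        have hy : (x.1, x.2 / lam) ∈ polarCoord.source := by
          rcases eq_or_ne x.2 0 with h2 | h2
          · left
            exact hN h2
          · right
            exact div_ne_zero h2 hlam.ne'
        set p : ℝ × ℝ := polarCoord (x.1, x.2 / lam) with hp
        have hpt : p ∈ polarCoord.target := polarCoord.map_source hy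
        have hinv : polarCoord.symm p = (x.1, x.2 / lam) := polarCoord.left_inv hy
        have hp1 : p.1 = Real.sqrt (q x) := by
          simp [hp, polarCoord, hq]
        refine ⟨p, ⟨?_, hpt.2⟩, ?_⟩
        · constructor
          · rw [hp1, show R' = Real.sqrt (R' ^ 2) from (Real.sqrt_sq h0.le).symm]
            exact Real.sqrt_lt_sqrt (by positivity) hx1
          · rw [hp1, show R = Real.sqrt (R ^ 2) from (Real.sqrt_sq hR.le).symm]
            exact Real.sqrt_lt_sqrt (by positivity) hx2
        · have h1 : p.1 * Real.cos p.2 = x.1 := congrArg Prod.fst hinv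
          have h2 : p.1 * Real.sin p.2 = x.2 / lam := congrArg Prod.snd hinv
          simp only [hΦ, h1, h2]
          rw [mul_div_cancel₀ _ hlam.ne']
      · refine measure_mono_null (t := univ ×ˢ ({0} : Set ℝ)) ?_ ?_
        · rintro x ⟨h1, _⟩; exact ⟨trivial, h1⟩
        · rw [show (volume : Measure (ℝ × ℝ)) = (volume : Measure ℝ).prod volume from
            Measure.volume_eq_prod _ _, Measure.prod_prod]
          simp
    · refine measure_mono_null (t := (∅ : Set (ℝ × ℝ))) ?_ measure_empty
      rintro x ⟨hx1, hx2⟩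
      exact hx2 (himg hx1)
  -- injectivity
  have hinj : Set.InjOn Φ s := by
    have hsubt : s ⊆ polarCoord.target := by
      rintro ⟨r, θ⟩ ⟨hr, hθ⟩
      exact ⟨h0.trans hr.1, hθ⟩
    intro p hp p' hp' h
    have h1 : p.1 * Real.cos p.2 = p'.1 * Real.cos p'.2 := congrArg Prod.fst h
    have h2 : p.1 * Real.sin p.2 = p'.1 * Real.sin p'.2 := by
      have := congrArg Prod.snd h
      simp only [hΦ] at this
      exact mul_left_cancel₀ hlam.ne' this
    have : polarCoord.symm p = polarCoord.symm p' := by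
      simp only [polarCoord_symm_apply]
      exact Prod.ext h1 h2
    exact polarCoord.symm.injOn (by rw [OpenPartialHomeomorph.symm_source]; exact hsubt hp)
      (by rw [OpenPartialHomeomorph.symm_source]; exact hsubt hp') this
  -- change of variables
  have hdet : ∀ p : ℝ × ℝ,
      (LinearMap.toContinuousLinearMap (Matrix.toLin (Module.Basis.finTwoProd ℝ) (Module.Basis.finTwoProd ℝ)
        !![Real.cos p.2, -p.1 * Real.sin p.2;
           lam * Real.sin p.2, lam * (p.1 * Real.cos p.2)])).det = lam * p.1 := by
    intro p
    conv_rhs => rw [← mul_one (lam * p.1), ← Real.cos_sq_add_sin_sq p.2]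
    simp only [neg_mul, LinearMap.det_toContinuousLinearMap, LinearMap.det_toLin,
      Matrix.det_fin_two_of, sub_neg_eq_add]
    ring
  calc (∫ x in ellipse0 lam R \ closure (ellipse0 lam R'), Wk lam mu b x)
      = ∫ x in Φ '' s, Wk lam mu b x := by
        exact (setIntegral_congr_set hae1).trans (setIntegral_congr_set hae2)
    _ = ∫ p in s, |(LinearMap.toContinuousLinearMap (Matrix.toLin (Module.Basis.finTwoProd ℝ)
          (Module.Basis.finTwoProd ℝ) !![Real.cos p.2, -p.1 * Real.sin p.2;
          lam * Real.sin p.2, lam * (p.1 * Real.cos p.2)])).det| • Wk lam mu b (Φ p) := by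
        exact integral_image_eq_integral_abs_det_fderiv_smul volume hs_meas
          (fun p _ => (hasFDerivAt_Phi_aux lam p).hasFDerivWithinAt) hinj _
    _ = ∫ p in s, (fun r : ℝ => (C₀ / lam) * r⁻¹) p.1 * (fun _ : ℝ => (1:ℝ)) p.2 := by
        refine setIntegral_congr_fun hs_meas fun p hp => ?_
        have hr0 : 0 < p.1 := h0.trans hp.1.1
        rw [hdet]
        have hD : lam ^ 2 * (Φ p).1 ^ 2 + (Φ p).2 ^ 2 = lam ^ 2 * p.1 ^ 2 := by
          simp only [hΦ]
          linear_combination (lam ^ 2 * p.1 ^ 2) * Real.sin_sq_add_cos_sq p.2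
        rw [Wk_eq_aux lam mu b (Φ p) (by rw [hD]; positivity), hD,
          abs_of_pos (mul_pos hlam hr0), smul_eq_mul, hC₀]
        field_simp
    _ = (∫ r in Ioo R' R, (C₀ / lam) * r⁻¹) * (∫ θ in Ioo (-Real.pi) Real.pi, (1:ℝ)) := by
        rw [hs, show (volume : Measure (ℝ × ℝ)) = (volume : Measure ℝ).prod volume from
          Measure.volume_eq_prod _ _]
        exact setIntegral_prod_mul (f := fun r : ℝ => C₀ / lam * r⁻¹) (g := fun _ : ℝ => (1:ℝ)) _ _
    _ = ((C₀ / lam) * Real.log (R / R')) * (2 * Real.pi) := by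
        congr 1
        · rw [MeasureTheory.integral_const_mul]
          congr 1
          rw [← MeasureTheory.integral_Ioc_eq_integral_Ioo,
            ← intervalIntegral.integral_of_le hRR.le, integral_inv_of_pos h0 hR]
        · rw [setIntegral_const, Real.volume_real_Ioo_of_le (by linarith), smul_eq_mul, mul_one]
          ring
    _ = mu * lam * b ^ 2 / (4 * Real.pi) * Real.log (R / R') := by
        rw [hC₀]
        field_simp
        ring
open Set Real in
private lemma integrableOn_Wk_aux (lam mu b : ℝ) {K : Set (ℝ × ℝ)}
    (hK : IsCompact K) (hK0 : ∀ x ∈ K, lam ^ 2 * x.1 ^ 2 + x.2 ^ 2 ≠ 0) :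
    MeasureTheory.IntegrableOn (Wk lam mu b) K := by
  have hc : ContinuousOn
      (fun x : ℝ × ℝ => b * lam / (2 * Real.pi * (lam ^ 2 * x.1 ^ 2 + x.2 ^ 2))) K := by
    refine ContinuousOn.div continuousOn_const (by fun_prop) fun x hx => ?_
    exact mul_ne_zero (by positivity) (hK0 x hx)
  have h1 : ContinuousOn (fun x : ℝ × ℝ =>
      b * lam / (2 * Real.pi * (lam ^ 2 * x.1 ^ 2 + x.2 ^ 2)) * (-x.2)) K :=
    hc.mul (continuous_snd.neg.continuousOn)
  have h2 : ContinuousOn (fun x : ℝ × ℝ =>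
      b * lam / (2 * Real.pi * (lam ^ 2 * x.1 ^ 2 + x.2 ^ 2)) * x.1) K :=
    hc.mul (continuous_fst.continuousOn)
  have hW : ContinuousOn (Wk lam mu b) K := by
    unfold Wk kfun0
    exact continuousOn_const.mul ((h1.mul (continuousOn_const.mul h1)).add
      (h2.mul (continuousOn_const.mul h2)))
  exact hW.integrableOn_compact hK


open Set Real

/-- For `0 < R' < R`, `∫_{E_R(0)\closure(E_{R'}(0))} W(k) dx = (μλb²/4π) log(R/R')`;
consequently, for bounded open `Ω ⊇ closure(E_{R₀}(0))`, the quantity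
`(μλb²/4π) log R + ∫_{Ω \ E_R(0)} W(k) dx` does not depend on `R ∈ (0, R₀)`. -/
theorem renormalized_self_energy_R_independent (lam mu b : ℝ)
    (hlam : 0 < lam) (hmu : 0 < mu) :
    (∀ R' R : ℝ, 0 < R' → R' < R →
      (∫ x in ellipse0 lam R \ closure (ellipse0 lam R'), Wk lam mu b x)
        = mu * lam * b ^ 2 / (4 * Real.pi) * Real.log (R / R'))
    ∧ ∀ (Ω : Set (ℝ × ℝ)) (R₀ : ℝ), IsOpen Ω → Bornology.IsBounded Ω → 0 < R₀ →
        closure (ellipse0 lam R₀) ⊆ Ω →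
        ∀ R R' : ℝ, R ∈ Set.Ioo 0 R₀ → R' ∈ Set.Ioo 0 R₀ →
          mu * lam * b ^ 2 / (4 * Real.pi) * Real.log R
              + (∫ x in Ω \ ellipse0 lam R, Wk lam mu b x)
            = mu * lam * b ^ 2 / (4 * Real.pi) * Real.log R'
              + ∫ x in Ω \ ellipse0 lam R', Wk lam mu b x := by
  constructor
  · exact fun R' R h0 hRR => annulus_integral_aux lam mu b hlam R' R h0 hRR
  · intro Ω R₀ hΩo hΩb hR₀ hsub
    have hEopen : ∀ r : ℝ, IsOpen (ellipse0 lam r) := fun r =>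
      isOpen_lt (by fun_prop) continuous_const
    have key : ∀ R R' : ℝ, R ∈ Set.Ioo 0 R₀ → R' ∈ Set.Ioo 0 R₀ → R' < R →
        mu * lam * b ^ 2 / (4 * Real.pi) * Real.log R
            + (∫ x in Ω \ ellipse0 lam R, Wk lam mu b x)
          = mu * lam * b ^ 2 / (4 * Real.pi) * Real.log R'
            + ∫ x in Ω \ ellipse0 lam R', Wk lam mu b x := by
      intro R R' hR hR' hlt
      have hER : ellipse0 lam R ⊆ Ω := fun x hx => hsub (subset_closure
        (show x.1 ^ 2 + (x.2 / lam) ^ 2 < R₀ ^ 2 from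
          lt_of_lt_of_le hx (by nlinarith [hR.1, hR.2])))
      have hEE : ellipse0 lam R' ⊆ ellipse0 lam R := fun x hx =>
        show x.1 ^ 2 + (x.2 / lam) ^ 2 < R ^ 2 from
          lt_of_lt_of_le hx (by nlinarith [hR'.1])
      set K : Set (ℝ × ℝ) := closure Ω \ ellipse0 lam R' with hKdef
      have hKcomp : IsCompact K :=
        Metric.isCompact_of_isClosed_isBounded (isClosed_closure.sdiff (hEopen R'))
          (hΩb.closure.subset diff_subset)
      have hK0 : ∀ x ∈ K, lam ^ 2 * x.1 ^ 2 + x.2 ^ 2 ≠ 0 := by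
        intro x hx hD
        have h1 : R' ^ 2 ≤ x.1 ^ 2 + (x.2 / lam) ^ 2 := not_lt.1 hx.2
        have hx1 : lam ^ 2 * x.1 ^ 2 = 0 :=
          le_antisymm (by nlinarith [sq_nonneg x.2]) (by positivity)
        have hx2 : x.2 ^ 2 = 0 := by nlinarith [sq_nonneg x.1, sq_nonneg lam]
        have hx1' : x.1 = 0 := by
          have := (mul_eq_zero.1 hx1).resolve_left (by positivity)
          exact pow_eq_zero_iff two_ne_zero |>.1 this
        have hx2' : x.2 = 0 := pow_eq_zero_iff two_ne_zero |>.1 hx2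
        rw [hx1', hx2'] at h1
        norm_num at h1
        nlinarith [hR'.1]
      have hintK : MeasureTheory.IntegrableOn (Wk lam mu b) K :=
        integrableOn_Wk_aux lam mu b hKcomp hK0
      have hint1 : MeasureTheory.IntegrableOn (Wk lam mu b) (Ω \ ellipse0 lam R) :=
        hintK.mono_set fun x hx => ⟨subset_closure hx.1, fun h => hx.2 (hEE h)⟩
      have hint2 : MeasureTheory.IntegrableOn (Wk lam mu b)
          (ellipse0 lam R \ ellipse0 lam R') :=
        hintK.mono_set fun x hx => ⟨subset_closure (hER hx.1), hx.2⟩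
      have hdisj : Disjoint (Ω \ ellipse0 lam R) (ellipse0 lam R \ ellipse0 lam R') :=
        Set.disjoint_left.2 fun x hx hx' => hx.2 hx'.1
      have hsplit : Ω \ ellipse0 lam R'
          = (Ω \ ellipse0 lam R) ∪ (ellipse0 lam R \ ellipse0 lam R') := by
        ext x
        constructor
        · rintro ⟨hxΩ, hx'⟩
          by_cases hxR : x ∈ ellipse0 lam R
          · exact Or.inr ⟨hxR, hx'⟩
          · exact Or.inl ⟨hxΩ, hxR⟩
        · rintro (⟨hxΩ, hx⟩ | ⟨hx, hx'⟩)
          · exact ⟨hxΩ, fun h => hx (hEE h)⟩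
          · exact ⟨hER hx, hx'⟩
      have hclos : closure (ellipse0 lam R') ⊆ {x : ℝ × ℝ | x.1 ^ 2 + (x.2 / lam) ^ 2 ≤ R' ^ 2} :=
        closure_minimal (fun x hx => le_of_lt (show _ < R' ^ 2 from hx))
          (isClosed_le (by fun_prop) continuous_const)
      have hmid : (∫ x in ellipse0 lam R \ ellipse0 lam R', Wk lam mu b x)
          = mu * lam * b ^ 2 / (4 * Real.pi) * Real.log (R / R') := by
        rw [← annulus_integral_aux lam mu b hlam R' R hR'.1 hlt]
        apply setIntegral_congr_set
        rw [MeasureTheory.ae_eq_set]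
        constructor
        · refine measure_mono_null (t := {x : ℝ × ℝ | x.1 ^ 2 + (x.2 / lam) ^ 2 = R' ^ 2}) ?_
            (level_null_aux lam hlam.ne' _)
          rintro x ⟨⟨hx1, hx2⟩, hx3⟩
          have hcl : x ∈ closure (ellipse0 lam R') := by
            by_contra hc
            exact hx3 ⟨hx1, hc⟩
          exact le_antisymm (hclos hcl) (not_lt.1 hx2)
        · refine measure_mono_null (t := (∅ : Set (ℝ × ℝ))) ?_ measure_empty
          rintro x ⟨⟨hx1, hx2⟩, hx3⟩
          exact hx3 ⟨hx1, fun h => hx2 (subset_closure h)⟩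
      rw [hsplit, MeasureTheory.setIntegral_union hdisj
        (((hEopen R).measurableSet).diff ((hEopen R').measurableSet)) hint1 hint2, hmid,
        Real.log_div hR.1.ne' hR'.1.ne']
      ring
    intro R R' hR hR'
    rcases lt_trichotomy R' R with h | h | h
    · exact key R R' hR hR' h
    · rw [h]
    · exact (key R' R hR' hR h).symm
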